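/- Let A be an m×m complex Hurwitz matrix, and let z : ℝ → ℂᵐ be a differentiable function satisfying z′(t) = −Aᴴ·z(t) for all t ≥ 0 and z(t) → 0 as t → ∞. Then z(t) = 0 for all t ≥ 0. -/

import Mathlib

open Matrix Polynomial Filter Topology

/-- A square complex matrix is Hurwitz if every root of its characteristic
polynomial has negative real part. -/
def IsHurwitz {n : Type*} [Fintype n] [DecidableEq n] (A : Matrix n n ℂ) : Prop :=
  ∀ μ : ℂ, A.charpoly.IsRoot μ → μ.re < 0

lemma scalar_ode_decay (c : ℂ) (hc : 0 < c.re) (g : ℝ → ℂ) (hg : Differentiable ℝ g)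
    (hode : ∀ t : ℝ, 0 ≤ t → deriv g t = c * g t)
    (hlim : Tendsto g atTop (nhds 0)) : ∀ t : ℝ, 0 ≤ t → g t = 0 := by
  set h : ℝ → ℂ := fun t => Complex.exp (-c * t) * g t with hh
  have hder : ∀ t : ℝ, 0 ≤ t → HasDerivAt h 0 t := by
    intro t ht
    have h1 : HasDerivAt (fun s : ℝ => -c * (s : ℂ)) (-c) t := by
      simpa using (Complex.ofRealCLM.hasDerivAt (x := t)).const_mul (-c)
    have h2 : HasDerivAt (fun s : ℝ => Complex.exp (-c * s))
        (Complex.exp (-c * t) * -c) t := by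
      simpa [mul_comm] using h1.cexp
    have h3 : HasDerivAt g (c * g t) t := by
      have := (hg t).hasDerivAt
      rwa [hode t ht] at this
    have := h2.mul h3
    convert this using 1
    · rfl
    · rfl
    · ring
  have hconst : ∀ t : ℝ, 0 ≤ t → h t = h 0 := by
    intro t ht
    have := constant_of_has_deriv_right_zero (f := h) (a := 0) (b := t)
      (fun x hx => ((hder x hx.1).continuousAt).continuousWithinAt)
      (fun x hx => (hder x hx.1).hasDerivWithinAt)
    exact this t ⟨ht, le_rfl⟩
  have hg0 : g 0 = 0 := by
    by_contra hne
    have habs : ∀ t : ℝ, 0 ≤ t → ‖g t‖ = Real.exp (c.re * t) * ‖g 0‖ := by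
      intro t ht
      have := hconst t ht
      simp only [hh] at this
      have hexp : Complex.exp (-c * t) ≠ 0 := Complex.exp_ne_zero _
      have : g t = Complex.exp (c * t) * g 0 := by
        have h4 : Complex.exp (c * t) * (Complex.exp (-c * t) * g t)
            = Complex.exp (c * t) * g 0 := by
          rw [this]; norm_num
        rw [← mul_assoc, ← Complex.exp_add] at h4
        simpa using h4
      rw [this, norm_mul, Complex.norm_exp]
      norm_num [Complex.mul_re, Complex.ofReal_re, Complex.ofReal_im]
    have h1 : Tendsto (fun t : ℝ => ‖g t‖) atTop atTop := by
      have h2 : Tendsto (fun t : ℝ => Real.exp (c.re * t) * ‖g 0‖) atTop atTop := by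
        apply Tendsto.atTop_mul_const (norm_pos_iff.mpr hne)
        exact Real.tendsto_exp_atTop.comp (tendsto_id.const_mul_atTop hc)
      refine h2.congr' ?_
      filter_upwards [eventually_ge_atTop (0:ℝ)] with t ht using (habs t ht).symm
    have h0 : Tendsto (fun t : ℝ => ‖g t‖) atTop (nhds 0) := by simpa using hlim.norm
    exact (h1.not_tendsto (disjoint_nhds_atTop 0).symm) h0
  intro t ht
  have := hconst t ht
  simp only [hh, hg0, mul_zero] at this
  have hexp : Complex.exp (-c * t) ≠ 0 := Complex.exp_ne_zero _
  exact (mul_eq_zero.mp this).resolve_left hexp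

/-- if `A` is Hurwitz and `z` is a differentiable solution of
`z′(t) = −Aᴴ·z(t)` for `t ≥ 0` with `z(t) → 0` as `t → ∞`, then `z(t) = 0`
for all `t ≥ 0`. -/
theorem hurwitz_adjoint_decaying_solution_zero (m : ℕ)
    (A : Matrix (Fin m) (Fin m) ℂ) (hA : IsHurwitz A)
    (z : ℝ → (Fin m → ℂ)) (hz : Differentiable ℝ z)
    (hode : ∀ t : ℝ, 0 ≤ t → deriv z t = -(Aᴴ.mulVec (z t)))
    (hlim : Tendsto z atTop (nhds 0)) :
    ∀ t : ℝ, 0 ≤ t → z t = 0 := by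
  set B : Matrix (Fin m) (Fin m) ℂ := A.map (starRingEnd ℂ) with hB
  set f : Module.End ℂ (Fin m → ℂ) := Matrix.mulVecLin B with hf
  -- key dot-product identity
  have hkey : ∀ u x : Fin m → ℂ,
      dotProduct u (Aᴴ.mulVec x) = dotProduct (B.mulVec u) x := by
    intro u x
    rw [Matrix.dotProduct_mulVec]
    congr 1
    have hT : Aᴴ = Bᵀ := by
      ext i j
      simp [hB, Matrix.conjTranspose_apply, Matrix.transpose_apply, Matrix.map_apply]
    rw [hT, Matrix.vecMul_transpose]
  -- eigenvalues of B have negative real part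
  have hRe : ∀ μ : ℂ, f.HasEigenvalue μ → μ.re < 0 := by
    intro μ hμ
    obtain ⟨v, hv⟩ := hμ.exists_hasEigenvector
    obtain ⟨hvmem, hvne⟩ := Module.End.hasEigenvector_iff.mp hv
    have happly : B.mulVec v = μ • v := by
      have := Module.End.mem_eigenspace_iff.mp hvmem
      simpa [hf, Matrix.mulVecLin_apply] using this
    have h0 : (μ • (1 : Matrix (Fin m) (Fin m) ℂ) - B).mulVec v = 0 := by
      rw [Matrix.sub_mulVec, Matrix.smul_mulVec, Matrix.one_mulVec, happly, sub_self]
    have hdet : (μ • (1 : Matrix (Fin m) (Fin m) ℂ) - B).det = 0 :=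
      (Matrix.exists_mulVec_eq_zero_iff).mp ⟨v, hvne, h0⟩
    have heval : B.charpoly.eval μ = 0 := by
      have h1 : B.charpoly.eval μ = ((Matrix.charmatrix B).map (Polynomial.evalRingHom μ)).det := by
        rw [Matrix.charpoly]
        simpa [RingHom.mapMatrix_apply] using
          RingHom.map_det (Polynomial.evalRingHom μ) (Matrix.charmatrix B)
      have h2 : (Matrix.charmatrix B).map (Polynomial.evalRingHom μ)
          = μ • (1 : Matrix (Fin m) (Fin m) ℂ) - B := by
        ext i j
        by_cases hij : i = j <;>
          simp [Matrix.charmatrix_apply, Matrix.map_apply, Matrix.one_apply, hij,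
            Matrix.smul_apply]
      rw [h1, h2, hdet]
    -- transfer to A
    have hBA : A.charpoly = B.charpoly.map (starRingEnd ℂ) := by
      have h3 : B.map (starRingEnd ℂ) = A := by
        ext i j; simp [hB, Matrix.map_apply]
      calc A.charpoly = (B.map (starRingEnd ℂ)).charpoly := by rw [h3]
        _ = B.charpoly.map (starRingEnd ℂ) := Matrix.charpoly_map B (starRingEnd ℂ)
    have hroot : A.charpoly.IsRoot ((starRingEnd ℂ) μ) := by
      rw [hBA, Polynomial.IsRoot, Polynomial.eval_map, Polynomial.eval₂_hom, heval, map_zero]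
    have := hA _ hroot
    simpa [Complex.conj_re] using this
  -- dot product with z has nice derivative
  have hasderiv : ∀ (u : Fin m → ℂ) (t : ℝ),
      HasDerivAt (fun s => dotProduct u (z s)) (dotProduct u (deriv z t)) t := by
    intro u t
    have hpi : ∀ i, HasDerivAt (fun s => z s i) (deriv z t i) t :=
      fun i => hasDerivAt_pi.mp (hz t).hasDerivAt i
    simpa [dotProduct] using
      HasDerivAt.fun_sum (fun i _ => ((hpi i).const_mul (u i)) : ∀ i ∈ Finset.univ, _)
  -- main induction on generalized eigenvectors
  have key : ∀ (k : ℕ) (μ : ℂ) (u : Fin m → ℂ),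
      ((f - μ • 1) ^ k) u = 0 → ∀ t : ℝ, 0 ≤ t → dotProduct u (z t) = 0 := by
    intro k
    induction k with
    | zero =>
      intro μ u hu t ht
      simp only [pow_zero, Module.End.one_apply] at hu
      simp [hu]
    | succ k ih =>
      intro μ u hu
      rcases eq_or_ne u 0 with rfl | hu0
      · intro t ht; simp
      · have hμ : μ.re < 0 := by
          apply hRe
          apply Module.End.hasEigenvalue_of_hasGenEigenvalue (k := k + 1)
          rw [Module.End.hasGenEigenvalue_iff]
          refine (Submodule.ne_bot_iff _).mpr ⟨u, ?_, hu0⟩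
          exact Module.End.mem_genEigenspace_nat.mpr hu
        set v : Fin m → ℂ := (f - μ • 1) u with hv
        have hvk : ((f - μ • 1) ^ k) v = 0 := by
          rw [hv, ← Module.End.mul_apply, ← pow_succ]
          exact hu
        have hvz : ∀ t : ℝ, 0 ≤ t → dotProduct v (z t) = 0 := ih μ v hvk
        have hfu : B.mulVec u = v + μ • u := by
          have : v = B.mulVec u - μ • u := by
            simp [hv, hf, LinearMap.sub_apply, LinearMap.smul_apply, Matrix.mulVecLin_apply]
          rw [this]; abel
        set g : ℝ → ℂ := fun s => dotProduct u (z s) with hg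
        have hgdiff : Differentiable ℝ g := fun t => (hasderiv u t).differentiableAt
        have hgode : ∀ t : ℝ, 0 ≤ t → deriv g t = (-μ) * g t := by
          intro t ht
          rw [(hasderiv u t).deriv, hode t ht]
          rw [dotProduct_neg, hkey u (z t), hfu, add_dotProduct,
            smul_dotProduct, hvz t ht]
          simp only [hg, smul_eq_mul]
          ring
        have hglim : Tendsto g atTop (nhds 0) := by
          have hcont : Continuous (fun w : Fin m → ℂ => dotProduct u w) := by
            simp only [dotProduct]
            exact continuous_finset_sum _ fun i _ => continuous_const.mul (continuous_apply i)
          have := (hcont.tendsto 0).comp hlim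
          simpa [hg, Function.comp_def] using this
        exact scalar_ode_decay (-μ) (by simpa using neg_pos.mpr hμ) g hgdiff hgode hglim
  -- conclude
  intro t ht
  have hall : ∀ u : Fin m → ℂ, dotProduct u (z t) = 0 := by
    intro u
    have hu : u ∈ (⊤ : Submodule ℂ (Fin m → ℂ)) := Submodule.mem_top
    rw [← Module.End.iSup_maxGenEigenspace_eq_top f] at hu
    refine Submodule.iSup_induction _ (motive := fun u => dotProduct u (z t) = 0) hu ?_ ?_ ?_
    · intro μ x hx
      obtain ⟨k, hk⟩ := (Module.End.mem_maxGenEigenspace f μ x).mp hx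
      exact key k μ x hk t ht
    · simp
    · intro x y hx hy
      rw [add_dotProduct, hx, hy, add_zero]
  exact dotProduct_eq_zero (z t) fun w => by
    rw [dotProduct_comm]; exact hall w
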